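/- arXiv:2510.16132 — 3 statements merged into one kernel-verified Lean document; each statement's English description precedes it below -/
import Mathlib

section
/- Let μ̄₁, μ̄₂ be probability distributions on S × A and let Q₁, Q₂ : S × A → ℝ satisfy ‖Q₁‖∞ ≤ 1/(1−γ) and ‖Q₂‖∞ ≤ 1/(1−γ). Then ‖F̄(Q₁,μ̄₁) − F̄(Q₂,μ̄₂)‖∞ ≤ 3 ‖Q₁ − Q₂‖∞ + (2/(1−γ)) · max_{(s,a)} |μ̄₁(s,a) − μ̄₂(s,a)|. -/
section

variable {S A : Type*} [Fintype S] [Fintype A] [Nonempty S] [Nonempty A]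

/-- Sup norm on `S × A → ℝ`. -/
noncomputable def supNorm (Q : S × A → ℝ) : ℝ :=
  Finset.univ.sup' Finset.univ_nonempty fun y => |Q y|

/-- The Bellman optimality operator. -/
noncomputable def bellmanOpt (p : S × A → S → ℝ) (R : S × A → ℝ) (γ : ℝ)
    (Q : S × A → ℝ) : S × A → ℝ :=
  fun sa => R sa + γ * ∑ s', p sa s' *
    (Finset.univ.sup' Finset.univ_nonempty fun a' => Q (s', a'))

/-- The expected operator `F̄(Q,μ̄)(s,a) = (1 − μ̄(s,a)) Q(s,a) + μ̄(s,a) H(Q)(s,a)`. -/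
noncomputable def Fbar (p : S × A → S → ℝ) (R : S × A → ℝ) (γ : ℝ)
    (μ : S × A → ℝ) (Q : S × A → ℝ) : S × A → ℝ :=
  fun sa => (1 - μ sa) * Q sa + μ sa * bellmanOpt p R γ Q sa

lemma le_supNorm (Q : S × A → ℝ) (sa : S × A) : |Q sa| ≤ supNorm Q :=
  Finset.le_sup' (fun y => |Q y|) (Finset.mem_univ sa)

lemma supNorm_le {Q : S × A → ℝ} {c : ℝ} (h : ∀ sa, |Q sa| ≤ c) : supNorm Q ≤ c :=
  Finset.sup'_le _ _ fun sa _ => h sa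

lemma supNorm_nonneg (Q : S × A → ℝ) : 0 ≤ supNorm Q :=
  le_trans (abs_nonneg _) (le_supNorm Q (Classical.arbitrary _))

lemma abs_sup'_sub_sup'_le {s : Finset A} (hs : s.Nonempty) (f g : A → ℝ) {c : ℝ}
    (h : ∀ a ∈ s, |f a - g a| ≤ c) :
    |s.sup' hs f - s.sup' hs g| ≤ c := by
  rw [abs_sub_le_iff]
  constructor
  · rw [sub_le_iff_le_add]
    refine Finset.sup'_le _ _ fun a ha => ?_
    calc f a ≤ g a + c := by have := h a ha; rw [abs_sub_le_iff] at this; linarith [this.1]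
    _ ≤ c + s.sup' hs g := by
        rw [add_comm]; gcongr; exact Finset.le_sup' _ ha
  · rw [sub_le_iff_le_add]
    refine Finset.sup'_le _ _ fun a ha => ?_
    calc g a ≤ f a + c := by have := h a ha; rw [abs_sub_le_iff] at this; linarith [this.2]
    _ ≤ c + s.sup' hs f := by
        rw [add_comm]; gcongr; exact Finset.le_sup' _ ha

/-- Joint Lipschitz-type bound for `F̄` in `(Q, μ̄)`. -/
theorem stmt_3
    (p : S × A → S → ℝ)
    (hp0 : ∀ sa s', 0 ≤ p sa s')
    (hp1 : ∀ sa, ∑ s', p sa s' = 1)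
    (R : S × A → ℝ) (hR : ∀ sa, |R sa| ≤ 1)
    (γ : ℝ) (hγ0 : 0 < γ) (hγ1 : γ < 1)
    (μ₁ μ₂ : S × A → ℝ)
    (hμ₁0 : ∀ sa, 0 ≤ μ₁ sa) (hμ₁1 : ∑ sa, μ₁ sa = 1)
    (hμ₂0 : ∀ sa, 0 ≤ μ₂ sa) (hμ₂1 : ∑ sa, μ₂ sa = 1)
    (Q₁ Q₂ : S × A → ℝ)
    (hQ₁ : supNorm Q₁ ≤ 1 / (1 - γ)) (hQ₂ : supNorm Q₂ ≤ 1 / (1 - γ)) :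
    supNorm (Fbar p R γ μ₁ Q₁ - Fbar p R γ μ₂ Q₂) ≤
      3 * supNorm (Q₁ - Q₂) + 2 / (1 - γ) * supNorm (μ₁ - μ₂) := by
  have hγ' : (0:ℝ) < 1 - γ := by linarith
  set D := supNorm (Q₁ - Q₂) with hD
  set M := supNorm (μ₁ - μ₂) with hM
  have hD0 : 0 ≤ D := supNorm_nonneg _
  have hM0 : 0 ≤ M := supNorm_nonneg _
  -- μ₁ sa ≤ 1
  have hμ₁le : ∀ sa, μ₁ sa ≤ 1 := fun sa => by
    rw [← hμ₁1]
    exact Finset.single_le_sum (fun i _ => hμ₁0 i) (Finset.mem_univ sa)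
  -- bound on |H Q₂ sa|
  have hsumQ : ∀ (Q : S × A → ℝ), supNorm Q ≤ 1 / (1 - γ) → ∀ sa,
      |∑ s', p sa s' * (Finset.univ.sup' Finset.univ_nonempty fun a' => Q (s', a'))|
        ≤ 1 / (1 - γ) := by
    intro Q hQ sa
    calc |∑ s', p sa s' * (Finset.univ.sup' Finset.univ_nonempty fun a' => Q (s', a'))|
        ≤ ∑ s', |p sa s' * (Finset.univ.sup' Finset.univ_nonempty fun a' => Q (s', a'))| :=
          Finset.abs_sum_le_sum_abs _ _
      _ ≤ ∑ s', p sa s' * (1 / (1 - γ)) := by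
          refine Finset.sum_le_sum fun s' _ => ?_
          rw [abs_mul, abs_of_nonneg (hp0 sa s')]
          refine mul_le_mul_of_nonneg_left ?_ (hp0 sa s')
          have h1 : ∀ a ∈ (Finset.univ : Finset A),
              |Q (s', a) - (0:ℝ)| ≤ 1 / (1 - γ) := fun a _ => by
            simpa using le_trans (le_supNorm Q (s', a)) hQ
          have := abs_sup'_sub_sup'_le Finset.univ_nonempty
            (fun a' => Q (s', a')) (fun _ => (0:ℝ)) h1
          simpa using this
      _ = 1 / (1 - γ) := by rw [← Finset.sum_mul, hp1, one_mul]
  have hH2 : ∀ sa, |bellmanOpt p R γ Q₂ sa| ≤ 1 / (1 - γ) := by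
    intro sa
    have h1 := hsumQ Q₂ hQ₂ sa
    have h2 := hR sa
    rw [bellmanOpt]
    calc |R sa + γ * ∑ s', p sa s' * (Finset.univ.sup' Finset.univ_nonempty fun a' => Q₂ (s', a'))|
        ≤ |R sa| + γ * |∑ s', p sa s' * (Finset.univ.sup' Finset.univ_nonempty fun a' => Q₂ (s', a'))| := by
          refine le_trans (abs_add_le _ _) ?_
          rw [abs_mul, abs_of_pos hγ0]
      _ ≤ 1 + γ * (1 / (1 - γ)) := by
          gcongr
      _ = 1 / (1 - γ) := by field_simp; ring
  -- contraction bound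
  have hHdiff : ∀ sa, |bellmanOpt p R γ Q₁ sa - bellmanOpt p R γ Q₂ sa| ≤ D := by
    intro sa
    have key : ∀ s' : S, |(Finset.univ.sup' Finset.univ_nonempty fun a' => Q₁ (s', a')) -
        (Finset.univ.sup' Finset.univ_nonempty fun a' => Q₂ (s', a'))| ≤ D := by
      intro s'
      refine abs_sup'_sub_sup'_le Finset.univ_nonempty _ _ fun a _ => ?_
      simpa using le_supNorm (Q₁ - Q₂) (s', a)
    have : bellmanOpt p R γ Q₁ sa - bellmanOpt p R γ Q₂ sa =
        γ * ∑ s', p sa s' * ((Finset.univ.sup' Finset.univ_nonempty fun a' => Q₁ (s', a')) -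
          (Finset.univ.sup' Finset.univ_nonempty fun a' => Q₂ (s', a'))) := by
      simp only [bellmanOpt]
      rw [add_sub_add_left_eq_sub, ← mul_sub, ← Finset.sum_sub_distrib]
      congr 1
      exact Finset.sum_congr rfl fun s' _ => (mul_sub _ _ _).symm
    rw [this, abs_mul, abs_of_pos hγ0]
    calc γ * |∑ s', p sa s' * ((Finset.univ.sup' Finset.univ_nonempty fun a' => Q₁ (s', a')) -
          (Finset.univ.sup' Finset.univ_nonempty fun a' => Q₂ (s', a')))|
        ≤ γ * ∑ s', p sa s' * D := by
          refine mul_le_mul_of_nonneg_left ?_ hγ0.le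
          refine le_trans (Finset.abs_sum_le_sum_abs _ _) (Finset.sum_le_sum fun s' _ => ?_)
          rw [abs_mul, abs_of_nonneg (hp0 sa s')]
          exact mul_le_mul_of_nonneg_left (key s') (hp0 sa s')
      _ = γ * D := by rw [← Finset.sum_mul, hp1, one_mul]
      _ ≤ D := by nlinarith
  refine supNorm_le fun sa => ?_
  have hdQ : |Q₁ sa - Q₂ sa| ≤ D := by simpa using le_supNorm (Q₁ - Q₂) sa
  have hdμ : |μ₁ sa - μ₂ sa| ≤ M := by simpa using le_supNorm (μ₁ - μ₂) sa
  have hQ2sa : |Q₂ sa| ≤ 1 / (1 - γ) := le_trans (le_supNorm Q₂ sa) hQ₂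
  have hH2sa := hH2 sa
  have hHd := hHdiff sa
  have hμ1 := hμ₁0 sa
  have hμ1' := hμ₁le sa
  have decomp : (Fbar p R γ μ₁ Q₁ - Fbar p R γ μ₂ Q₂) sa =
      (1 - μ₁ sa) * (Q₁ sa - Q₂ sa) + (μ₂ sa - μ₁ sa) * Q₂ sa
        + μ₁ sa * (bellmanOpt p R γ Q₁ sa - bellmanOpt p R γ Q₂ sa)
        + (μ₁ sa - μ₂ sa) * bellmanOpt p R γ Q₂ sa := by
    simp only [Pi.sub_apply, Fbar]; ring
  rw [decomp]
  have b1 : |(1 - μ₁ sa) * (Q₁ sa - Q₂ sa)| ≤ D := by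
    rw [abs_mul, abs_of_nonneg (by linarith : (0:ℝ) ≤ 1 - μ₁ sa)]
    nlinarith [abs_nonneg (Q₁ sa - Q₂ sa)]
  have b2 : |(μ₂ sa - μ₁ sa) * Q₂ sa| ≤ M * (1 / (1 - γ)) := by
    rw [abs_mul, abs_sub_comm]
    exact mul_le_mul hdμ hQ2sa (abs_nonneg _) hM0
  have b3 : |μ₁ sa * (bellmanOpt p R γ Q₁ sa - bellmanOpt p R γ Q₂ sa)| ≤ D := by
    rw [abs_mul, abs_of_nonneg hμ1]
    nlinarith [abs_nonneg (bellmanOpt p R γ Q₁ sa - bellmanOpt p R γ Q₂ sa)]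
  have b4 : |(μ₁ sa - μ₂ sa) * bellmanOpt p R γ Q₂ sa| ≤ M * (1 / (1 - γ)) := by
    rw [abs_mul]
    exact mul_le_mul hdμ hH2sa (abs_nonneg _) hM0
  have habs := abs_add_le ((1 - μ₁ sa) * (Q₁ sa - Q₂ sa) + (μ₂ sa - μ₁ sa) * Q₂ sa
        + μ₁ sa * (bellmanOpt p R γ Q₁ sa - bellmanOpt p R γ Q₂ sa))
      ((μ₁ sa - μ₂ sa) * bellmanOpt p R γ Q₂ sa)
  have habs2 := abs_add_le ((1 - μ₁ sa) * (Q₁ sa - Q₂ sa) + (μ₂ sa - μ₁ sa) * Q₂ sa)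
      (μ₁ sa * (bellmanOpt p R γ Q₁ sa - bellmanOpt p R γ Q₂ sa))
  have habs3 := abs_add_le ((1 - μ₁ sa) * (Q₁ sa - Q₂ sa)) ((μ₂ sa - μ₁ sa) * Q₂ sa)
  have : 2 / (1 - γ) * M = M * (1 / (1 - γ)) + M * (1 / (1 - γ)) := by ring
  linarith
end
end

section
/- Let X be a finite nonempty set and let P₁, P₂ be row-stochastic matrices on X with probability vectors μ₁, μ₂ such that the lazy matrices 𝒫ᵢ = (Pᵢ + I)/2 have mixing parameters (Cᵢ, ρᵢ) with respect to μᵢ (i = 1,2). Let y₁, y₂ : X → ℝ satisfy Σ_x μᵢ(x) yᵢ(x) = 0, and set xᵢ := (1/2) Σ_{k=0}^∞ 𝒫ᵢ^k yᵢ, C_max := max(C₁,C₂), ρ_max := max(ρ₁,ρ₂). Then for every integer n ≥ 1: ‖x₁ − x₂‖∞ ≤ C_max n² ρ_max^n (‖y₁‖∞ + ‖y₂‖∞)/(1 − ρ_max) + (n²/8) ‖P₁ − P₂‖_{∞,op} (‖y₁‖∞ + ‖y₂‖∞) + (n/2) ‖y₁ − y₂‖∞, where ‖v‖∞ := max_x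 |v(x)| and ‖M‖_{∞,op} := max_x Σ_{x'} |M(x,x')| is the max-row-sum (ℓ∞-induced) matrix norm. -/
section

variable {X : Type*} [Fintype X] [DecidableEq X] [Nonempty X]

/-- Sup norm of a vector. -/
noncomputable def vecSupNorm (v : X → ℝ) : ℝ :=
  Finset.univ.sup' Finset.univ_nonempty fun x => |v x|

/-- Max-row-sum (ℓ∞-induced) matrix norm. -/
noncomputable def rowSumNorm (M : Matrix X X ℝ) : ℝ :=
  Finset.univ.sup' Finset.univ_nonempty fun x => ∑ x', |M x x'|

/-- The lazy matrix `𝒫 = (P + I)/2`. -/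
noncomputable def lazy (P : Matrix X X ℝ) : Matrix X X ℝ :=
  (2⁻¹ : ℝ) • (P + 1)

/-- Mixing parameters `(C, ρ)` for a matrix `M` with respect to `μ`. -/
def HasMixing (M : Matrix X X ℝ) (μ : X → ℝ) (C ρ : ℝ) : Prop :=
  ∀ k : ℕ, ∀ x : X, (2⁻¹ : ℝ) * ∑ x', |(M ^ k) x x' - μ x'| ≤ C * ρ ^ k

set_option linter.unusedSectionVars false

lemma abs_le_vecSupNorm (v : X → ℝ) (x : X) : |v x| ≤ vecSupNorm v :=
  Finset.le_sup' (f := fun x => |v x|) (Finset.mem_univ x)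

lemma vecSupNorm_eq_norm (v : X → ℝ) : vecSupNorm v = ‖v‖ := by
  apply le_antisymm
  · apply Finset.sup'_le
    intro x _
    simpa [Real.norm_eq_abs] using norm_le_pi_norm v x
  · have h0 : 0 ≤ vecSupNorm v := by
      obtain ⟨x⟩ := ‹Nonempty X›
      exact le_trans (abs_nonneg (v x)) (abs_le_vecSupNorm v x)
    rw [pi_norm_le_iff_of_nonneg h0]
    intro x
    simpa [Real.norm_eq_abs] using abs_le_vecSupNorm v x

lemma row_le_rowSumNorm (M : Matrix X X ℝ) (x : X) : ∑ x', |M x x'| ≤ rowSumNorm M :=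
  Finset.le_sup' (f := fun x => ∑ x', |M x x'|) (Finset.mem_univ x)

lemma rowSumNorm_nonneg (M : Matrix X X ℝ) : 0 ≤ rowSumNorm M := by
  obtain ⟨x⟩ := ‹Nonempty X›
  exact le_trans (Finset.sum_nonneg fun _ _ => abs_nonneg _) (row_le_rowSumNorm M x)

lemma norm_mulVec_le (M : Matrix X X ℝ) (v : X → ℝ) :
    ‖M.mulVec v‖ ≤ rowSumNorm M * ‖v‖ := by
  rw [pi_norm_le_iff_of_nonneg (mul_nonneg (rowSumNorm_nonneg M) (norm_nonneg v))]
  intro x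
  rw [Real.norm_eq_abs, Matrix.mulVec, dotProduct]
  calc |∑ x', M x x' * v x'| ≤ ∑ x', |M x x' * v x'| := Finset.abs_sum_le_sum_abs _ _
    _ ≤ ∑ x', |M x x'| * ‖v‖ := by
        refine Finset.sum_le_sum fun x' _ => ?_
        rw [abs_mul]
        exact mul_le_mul_of_nonneg_left
          (by simpa [Real.norm_eq_abs] using norm_le_pi_norm v x') (abs_nonneg _)
    _ = (∑ x', |M x x'|) * ‖v‖ := by rw [Finset.sum_mul]
    _ ≤ rowSumNorm M * ‖v‖ :=
        mul_le_mul_of_nonneg_right (row_le_rowSumNorm M x) (norm_nonneg v)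

lemma norm_mulVec_le_of_stoch (M : Matrix X X ℝ) (h0 : ∀ x x', 0 ≤ M x x')
    (h1 : ∀ x, ∑ x', M x x' = 1) (v : X → ℝ) :
    ‖M.mulVec v‖ ≤ ‖v‖ := by
  have : rowSumNorm M ≤ 1 := by
    apply Finset.sup'_le
    intro x _
    have : ∑ x', |M x x'| = 1 := by
      rw [Finset.sum_congr rfl fun x' _ => abs_of_nonneg (h0 x x')]
      exact h1 x
    exact this.le
  calc ‖M.mulVec v‖ ≤ rowSumNorm M * ‖v‖ := norm_mulVec_le M v
    _ ≤ 1 * ‖v‖ := mul_le_mul_of_nonneg_right this (norm_nonneg v)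
    _ = ‖v‖ := one_mul _

lemma lazy_nonneg (P : Matrix X X ℝ) (h0 : ∀ x x', 0 ≤ P x x') :
    ∀ x x', 0 ≤ lazy P x x' := by
  intro x x'
  simp only [lazy, Matrix.smul_apply, Matrix.add_apply, Matrix.one_apply, smul_eq_mul]
  have := h0 x x'
  positivity

lemma lazy_rowsum (P : Matrix X X ℝ) (h1 : ∀ x, ∑ x', P x x' = 1) :
    ∀ x, ∑ x', lazy P x x' = 1 := by
  intro x
  simp only [lazy, Matrix.smul_apply, Matrix.add_apply, smul_eq_mul]
  rw [← Finset.mul_sum, Finset.sum_add_distrib, h1 x]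
  simp [Matrix.one_apply]
  norm_num

lemma norm_pow_mulVec_le_of_stoch (M : Matrix X X ℝ) (h0 : ∀ x x', 0 ≤ M x x')
    (h1 : ∀ x, ∑ x', M x x' = 1) (v : X → ℝ) (k : ℕ) :
    ‖(M ^ k).mulVec v‖ ≤ ‖v‖ := by
  induction k with
  | zero => simp
  | succ k ih =>
      rw [pow_succ']
      rw [← Matrix.mulVec_mulVec]
      exact le_trans (norm_mulVec_le_of_stoch M h0 h1 _) ih

lemma mix_decay (M : Matrix X X ℝ) (μ : X → ℝ) (C ρ : ℝ)
    (hmix : HasMixing M μ C ρ) (y : X → ℝ) (hy : ∑ x, μ x * y x = 0)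
    (hCρ : ∀ j : ℕ, 0 ≤ C * ρ ^ j) (k : ℕ) :
    ‖(M ^ k).mulVec y‖ ≤ 2 * C * ρ ^ k * ‖y‖ := by
  have hnn : (0:ℝ) ≤ 2 * C * ρ ^ k * ‖y‖ := by
    have h := hCρ k
    have := norm_nonneg y
    nlinarith
  rw [pi_norm_le_iff_of_nonneg hnn]
  intro x
  rw [Real.norm_eq_abs, Matrix.mulVec, dotProduct]
  have key : ∑ x', (M ^ k) x x' * y x' = ∑ x', ((M ^ k) x x' - μ x') * y x' := by
    rw [Finset.sum_congr rfl (fun x' _ => by ring_nf :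
      ∀ x' ∈ Finset.univ, ((M ^ k) x x' - μ x') * y x' = (M ^ k) x x' * y x' - μ x' * y x')]
    rw [Finset.sum_sub_distrib, hy, sub_zero]
  rw [key]
  calc |∑ x', ((M ^ k) x x' - μ x') * y x'|
      ≤ ∑ x', |((M ^ k) x x' - μ x') * y x'| := Finset.abs_sum_le_sum_abs _ _
    _ ≤ ∑ x', |(M ^ k) x x' - μ x'| * ‖y‖ := by
        refine Finset.sum_le_sum fun x' _ => ?_
        rw [abs_mul]
        exact mul_le_mul_of_nonneg_left
          (by simpa [Real.norm_eq_abs] using norm_le_pi_norm y x') (abs_nonneg _)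
    _ = (∑ x', |(M ^ k) x x' - μ x'|) * ‖y‖ := by rw [Finset.sum_mul]
    _ ≤ 2 * C * ρ ^ k * ‖y‖ := by
        refine mul_le_mul_of_nonneg_right ?_ (norm_nonneg y)
        have := hmix k x
        linarith

lemma telescope (A B : Matrix X X ℝ)
    (hA0 : ∀ x x', 0 ≤ A x x') (hA1 : ∀ x, ∑ x', A x x' = 1)
    (hB0 : ∀ x x', 0 ≤ B x x') (hB1 : ∀ x, ∑ x', B x x' = 1)
    (v : X → ℝ) (k : ℕ) :
    ‖(A ^ k - B ^ k).mulVec v‖ ≤ k * (rowSumNorm (A - B) * ‖v‖) := by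
  induction k with
  | zero => simp
  | succ k ih =>
      have hdecomp : A ^ (k+1) - B ^ (k+1) = A * (A ^ k - B ^ k) + (A - B) * B ^ k := by
        rw [mul_sub, sub_mul, pow_succ', pow_succ']
        abel
      rw [hdecomp, Matrix.add_mulVec, ← Matrix.mulVec_mulVec, ← Matrix.mulVec_mulVec]
      calc ‖A.mulVec ((A ^ k - B ^ k).mulVec v) + (A - B).mulVec ((B ^ k).mulVec v)‖
          ≤ ‖A.mulVec ((A ^ k - B ^ k).mulVec v)‖ + ‖(A - B).mulVec ((B ^ k).mulVec v)‖ :=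
            norm_add_le _ _
        _ ≤ ‖(A ^ k - B ^ k).mulVec v‖ + rowSumNorm (A - B) * ‖(B ^ k).mulVec v‖ :=
            add_le_add (norm_mulVec_le_of_stoch A hA0 hA1 _) (norm_mulVec_le _ _)
        _ ≤ k * (rowSumNorm (A - B) * ‖v‖) + rowSumNorm (A - B) * ‖v‖ := by
            refine add_le_add ih ?_
            exact mul_le_mul_of_nonneg_left
              (norm_pow_mulVec_le_of_stoch B hB0 hB1 v k) (rowSumNorm_nonneg _)
        _ = (k + 1 : ℕ) * (rowSumNorm (A - B) * ‖v‖) := by push_cast; ring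

lemma gauss_sum (n : ℕ) : ∑ k ∈ Finset.range n, (k : ℝ) = n * (n - 1) / 2 := by
  induction n with
  | zero => simp
  | succ n ih => rw [Finset.sum_range_succ, ih]; push_cast; ring

lemma lazy_sub (P Q : Matrix X X ℝ) : lazy P - lazy Q = (2⁻¹ : ℝ) • (P - Q) := by
  simp [lazy, smul_sub, smul_add]

lemma rowSumNorm_half_smul (M : Matrix X X ℝ) :
    rowSumNorm ((2⁻¹ : ℝ) • M) ≤ 2⁻¹ * rowSumNorm M := by
  apply Finset.sup'_le
  intro x _
  have : ∑ x', |((2⁻¹ : ℝ) • M) x x'| = 2⁻¹ * ∑ x', |M x x'| := by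
    rw [Finset.mul_sum]
    refine Finset.sum_congr rfl fun x' _ => ?_
    rw [Matrix.smul_apply, smul_eq_mul, abs_mul,
      abs_of_nonneg (by norm_num : (0:ℝ) ≤ (2⁻¹:ℝ))]
  rw [this]
  exact mul_le_mul_of_nonneg_left (row_le_rowSumNorm M x) (by norm_num)

lemma mul_chain {a b c a' b' c' : ℝ} (ha : a ≤ a') (hb : b ≤ b') (hc : c ≤ c')
    (hb0 : 0 ≤ b) (hc0 : 0 ≤ c) (ha'0 : 0 ≤ a') (hb'0 : 0 ≤ b') :
    a * b * c ≤ a' * b' * c' :=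
  mul_le_mul (mul_le_mul ha hb hb0 ha'0) hc hc0 (mul_nonneg ha'0 hb'0)

set_option maxHeartbeats 1000000 in
/-- Sensitivity bound for solutions of the Poisson equation built from the lazy
chains of two stochastic matrices. -/
theorem stmt_8
    (P₁ P₂ : Matrix X X ℝ)
    (hP₁0 : ∀ x x', 0 ≤ P₁ x x') (hP₁1 : ∀ x, ∑ x', P₁ x x' = 1)
    (hP₂0 : ∀ x x', 0 ≤ P₂ x x') (hP₂1 : ∀ x, ∑ x', P₂ x x' = 1)
    (μ₁ μ₂ : X → ℝ)
    (hμ₁0 : ∀ x, 0 ≤ μ₁ x) (hμ₁1 : ∑ x, μ₁ x = 1)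
    (hμ₂0 : ∀ x, 0 ≤ μ₂ x) (hμ₂1 : ∑ x, μ₂ x = 1)
    (C₁ ρ₁ C₂ ρ₂ : ℝ)
    (hC₁ : 0 < C₁) (hρ₁0 : 0 < ρ₁) (hρ₁1 : ρ₁ < 1)
    (hC₂ : 0 < C₂) (hρ₂0 : 0 < ρ₂) (hρ₂1 : ρ₂ < 1)
    (hmix₁ : HasMixing (lazy P₁) μ₁ C₁ ρ₁)
    (hmix₂ : HasMixing (lazy P₂) μ₂ C₂ ρ₂)
    (y₁ y₂ : X → ℝ)
    (hy₁ : ∑ x, μ₁ x * y₁ x = 0) (hy₂ : ∑ x, μ₂ x * y₂ x = 0)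
    (x₁ x₂ : X → ℝ)
    (hx₁ : x₁ = (2⁻¹ : ℝ) • ∑' k : ℕ, (lazy P₁ ^ k).mulVec y₁)
    (hx₂ : x₂ = (2⁻¹ : ℝ) • ∑' k : ℕ, (lazy P₂ ^ k).mulVec y₂) :
    ∀ n : ℕ, 1 ≤ n →
      vecSupNorm (x₁ - x₂) ≤
        max C₁ C₂ * (n : ℝ) ^ 2 * max ρ₁ ρ₂ ^ n *
            (vecSupNorm y₁ + vecSupNorm y₂) / (1 - max ρ₁ ρ₂)
        + (n : ℝ) ^ 2 / 8 * rowSumNorm (P₁ - P₂) *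
            (vecSupNorm y₁ + vecSupNorm y₂)
        + (n : ℝ) / 2 * vecSupNorm (y₁ - y₂) := by
  intro n hn
  simp only [vecSupNorm_eq_norm]
  have hn1 : (1 : ℝ) ≤ (n : ℝ) := by exact_mod_cast hn
  set ρ : ℝ := max ρ₁ ρ₂ with hρdef
  set C : ℝ := max C₁ C₂ with hCdef
  have hρ0 : 0 < ρ := lt_max_of_lt_left hρ₁0
  have hρ1 : ρ < 1 := max_lt hρ₁1 hρ₂1
  have hC0 : 0 < C := lt_max_of_lt_left hC₁
  have hL₁0 := lazy_nonneg P₁ hP₁0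
  have hL₁1 := lazy_rowsum P₁ hP₁1
  have hL₂0 := lazy_nonneg P₂ hP₂0
  have hL₂1 := lazy_rowsum P₂ hP₂1
  set f₁ : ℕ → (X → ℝ) := fun k => (lazy P₁ ^ k).mulVec y₁ with hf₁
  set f₂ : ℕ → (X → ℝ) := fun k => (lazy P₂ ^ k).mulVec y₂ with hf₂
  have hCρ₁ : ∀ j : ℕ, 0 ≤ C₁ * ρ₁ ^ j := fun j => by positivity
  have hCρ₂ : ∀ j : ℕ, 0 ≤ C₂ * ρ₂ ^ j := fun j => by positivity
  have hb₁ : ∀ k, ‖f₁ k‖ ≤ 2 * C₁ * ρ₁ ^ k * ‖y₁‖ := fun k =>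
    mix_decay (lazy P₁) μ₁ C₁ ρ₁ hmix₁ y₁ hy₁ hCρ₁ k
  have hb₂ : ∀ k, ‖f₂ k‖ ≤ 2 * C₂ * ρ₂ ^ k * ‖y₂‖ := fun k =>
    mix_decay (lazy P₂) μ₂ C₂ ρ₂ hmix₂ y₂ hy₂ hCρ₂ k
  have hsum₁ : Summable f₁ := by
    refine Summable.of_norm_bounded ?_ hb₁
    exact ((summable_geometric_of_lt_one hρ₁0.le hρ₁1).mul_left (2 * C₁)).mul_right ‖y₁‖
  have hsum₂ : Summable f₂ := by
    refine Summable.of_norm_bounded ?_ hb₂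
    exact ((summable_geometric_of_lt_one hρ₂0.le hρ₂1).mul_left (2 * C₂)).mul_right ‖y₂‖
  -- tail bounds
  have hT₁ : ‖∑' k : ℕ, f₁ (k + n)‖ ≤ 2 * C₁ * ‖y₁‖ * (1 - ρ₁)⁻¹ * ρ₁ ^ n := by
    refine tsum_of_norm_bounded
      (((hasSum_geometric_of_lt_one hρ₁0.le hρ₁1).mul_left (2 * C₁ * ‖y₁‖)).mul_right (ρ₁ ^ n))
      fun k => ?_
    calc ‖f₁ (k + n)‖ ≤ 2 * C₁ * ρ₁ ^ (k + n) * ‖y₁‖ := hb₁ (k + n)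
      _ = 2 * C₁ * ‖y₁‖ * ρ₁ ^ k * ρ₁ ^ n := by rw [pow_add]; ring
  have hT₂ : ‖∑' k : ℕ, f₂ (k + n)‖ ≤ 2 * C₂ * ‖y₂‖ * (1 - ρ₂)⁻¹ * ρ₂ ^ n := by
    refine tsum_of_norm_bounded
      (((hasSum_geometric_of_lt_one hρ₂0.le hρ₂1).mul_left (2 * C₂ * ‖y₂‖)).mul_right (ρ₂ ^ n))
      fun k => ?_
    calc ‖f₂ (k + n)‖ ≤ 2 * C₂ * ρ₂ ^ (k + n) * ‖y₂‖ := hb₂ (k + n)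
      _ = 2 * C₂ * ‖y₂‖ * ρ₂ ^ k * ρ₂ ^ n := by rw [pow_add]; ring
  -- monotonicity to the max parameters
  have hinv₁ : (1 - ρ₁)⁻¹ ≤ (1 - ρ)⁻¹ :=
    inv_anti₀ (by linarith) (by simp [hρdef]; linarith [le_max_left ρ₁ ρ₂])
  have hinv₂ : (1 - ρ₂)⁻¹ ≤ (1 - ρ)⁻¹ :=
    inv_anti₀ (by linarith) (by simp [hρdef]; linarith [le_max_right ρ₁ ρ₂])
  have hmono₁ : 2 * C₁ * ‖y₁‖ * (1 - ρ₁)⁻¹ * ρ₁ ^ n ≤ 2 * C * ‖y₁‖ * (1 - ρ)⁻¹ * ρ ^ n := by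
    have h1 : C₁ ≤ C := le_max_left _ _
    have h2 : ρ₁ ^ n ≤ ρ ^ n := pow_le_pow_left₀ hρ₁0.le (le_max_left _ _) n
    refine mul_chain ?_ hinv₁ h2 (inv_nonneg.mpr (by linarith)) (pow_nonneg hρ₁0.le n)
      (mul_nonneg (mul_nonneg (by norm_num) hC0.le) (norm_nonneg y₁))
      (inv_nonneg.mpr (by linarith))
    exact mul_le_mul_of_nonneg_right (by linarith) (norm_nonneg y₁)
  have hmono₂ : 2 * C₂ * ‖y₂‖ * (1 - ρ₂)⁻¹ * ρ₂ ^ n ≤ 2 * C * ‖y₂‖ * (1 - ρ)⁻¹ * ρ ^ n := by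
    have h1 : C₂ ≤ C := le_max_right _ _
    have h2 : ρ₂ ^ n ≤ ρ ^ n := pow_le_pow_left₀ hρ₂0.le (le_max_right _ _) n
    refine mul_chain ?_ hinv₂ h2 (inv_nonneg.mpr (by linarith)) (pow_nonneg hρ₂0.le n)
      (mul_nonneg (mul_nonneg (by norm_num) hC0.le) (norm_nonneg y₂))
      (inv_nonneg.mpr (by linarith))
    exact mul_le_mul_of_nonneg_right (by linarith) (norm_nonneg y₂)
  -- decomposition
  have hsplit : x₁ - x₂ = (2⁻¹ : ℝ) •
      ((∑ k ∈ Finset.range n, (f₁ k - f₂ k)) +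
        ((∑' k : ℕ, f₁ (k + n)) - ∑' k : ℕ, f₂ (k + n))) := by
    rw [hx₁, hx₂, ← smul_sub]
    congr 1
    rw [← Summable.sum_add_tsum_nat_add n hsum₁, ← Summable.sum_add_tsum_nat_add n hsum₂,
      Finset.sum_sub_distrib]
    abel
  -- head termwise bound
  have hhead : ∀ k : ℕ, ‖f₁ k - f₂ k‖ ≤
      (k : ℝ) * (2⁻¹ * rowSumNorm (P₁ - P₂) * ‖y₁‖) + ‖y₁ - y₂‖ := by
    intro k
    have hre : f₁ k - f₂ k =
        (lazy P₁ ^ k - lazy P₂ ^ k).mulVec y₁ + (lazy P₂ ^ k).mulVec (y₁ - y₂) := by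
      simp only [hf₁, hf₂, Matrix.sub_mulVec, Matrix.mulVec_sub]
      abel
    have hRsub : rowSumNorm (lazy P₁ - lazy P₂) ≤ 2⁻¹ * rowSumNorm (P₁ - P₂) := by
      rw [lazy_sub]
      exact rowSumNorm_half_smul _
    rw [hre]
    calc ‖(lazy P₁ ^ k - lazy P₂ ^ k).mulVec y₁ + (lazy P₂ ^ k).mulVec (y₁ - y₂)‖
        ≤ ‖(lazy P₁ ^ k - lazy P₂ ^ k).mulVec y₁‖ + ‖(lazy P₂ ^ k).mulVec (y₁ - y₂)‖ :=
          norm_add_le _ _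
      _ ≤ (k : ℝ) * (rowSumNorm (lazy P₁ - lazy P₂) * ‖y₁‖) + ‖y₁ - y₂‖ :=
          add_le_add (telescope (lazy P₁) (lazy P₂) hL₁0 hL₁1 hL₂0 hL₂1 y₁ k)
            (norm_pow_mulVec_le_of_stoch (lazy P₂) hL₂0 hL₂1 _ k)
      _ ≤ (k : ℝ) * (2⁻¹ * rowSumNorm (P₁ - P₂) * ‖y₁‖) + ‖y₁ - y₂‖ := by
          refine add_le_add ?_ le_rfl
          exact mul_le_mul_of_nonneg_left
            (mul_le_mul_of_nonneg_right hRsub (norm_nonneg y₁)) (Nat.cast_nonneg k)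
  have hheadsum : ∑ k ∈ Finset.range n, ‖f₁ k - f₂ k‖ ≤
      (n : ℝ) * ((n : ℝ) - 1) / 2 * (2⁻¹ * rowSumNorm (P₁ - P₂) * ‖y₁‖)
        + (n : ℝ) * ‖y₁ - y₂‖ := by
    calc ∑ k ∈ Finset.range n, ‖f₁ k - f₂ k‖
        ≤ ∑ k ∈ Finset.range n,
            ((k : ℝ) * (2⁻¹ * rowSumNorm (P₁ - P₂) * ‖y₁‖) + ‖y₁ - y₂‖) :=
          Finset.sum_le_sum fun k _ => hhead k
      _ = (∑ k ∈ Finset.range n, (k : ℝ)) * (2⁻¹ * rowSumNorm (P₁ - P₂) * ‖y₁‖)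
            + (n : ℝ) * ‖y₁ - y₂‖ := by
          rw [Finset.sum_add_distrib, ← Finset.sum_mul, Finset.sum_const,
            Finset.card_range, nsmul_eq_mul]
      _ = (n : ℝ) * ((n : ℝ) - 1) / 2 * (2⁻¹ * rowSumNorm (P₁ - P₂) * ‖y₁‖)
            + (n : ℝ) * ‖y₁ - y₂‖ := by rw [gauss_sum]
  -- norm bound of the decomposition
  have hmain : ‖x₁ - x₂‖ ≤ 2⁻¹ *
      ((∑ k ∈ Finset.range n, ‖f₁ k - f₂ k‖)
        + (‖∑' k : ℕ, f₁ (k + n)‖ + ‖∑' k : ℕ, f₂ (k + n)‖)) := by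
    rw [hsplit, norm_smul]
    have : ‖(2⁻¹ : ℝ)‖ = 2⁻¹ := by rw [Real.norm_eq_abs]; norm_num
    rw [this]
    refine mul_le_mul_of_nonneg_left ?_ (by norm_num)
    calc ‖(∑ k ∈ Finset.range n, (f₁ k - f₂ k)) +
          ((∑' k : ℕ, f₁ (k + n)) - ∑' k : ℕ, f₂ (k + n))‖
        ≤ ‖∑ k ∈ Finset.range n, (f₁ k - f₂ k)‖ +
            ‖(∑' k : ℕ, f₁ (k + n)) - ∑' k : ℕ, f₂ (k + n)‖ := norm_add_le _ _
      _ ≤ (∑ k ∈ Finset.range n, ‖f₁ k - f₂ k‖) +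
            (‖∑' k : ℕ, f₁ (k + n)‖ + ‖∑' k : ℕ, f₂ (k + n)‖) :=
          add_le_add (norm_sum_le _ _) (norm_sub_le _ _)
  -- put it together
  have hR : 0 ≤ rowSumNorm (P₁ - P₂) := rowSumNorm_nonneg _
  have hY₁ : 0 ≤ ‖y₁‖ := norm_nonneg _
  have hY₂ : 0 ≤ ‖y₂‖ := norm_nonneg _
  have hD : 0 ≤ ‖y₁ - y₂‖ := norm_nonneg _
  have hρn : 0 < ρ ^ n := pow_pos hρ0 n
  have hiv : 0 < (1 - ρ)⁻¹ := inv_pos.mpr (by linarith)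
  have htail : ‖∑' k : ℕ, f₁ (k + n)‖ + ‖∑' k : ℕ, f₂ (k + n)‖ ≤
      2 * C * (‖y₁‖ + ‖y₂‖) * (1 - ρ)⁻¹ * ρ ^ n := by
    have := add_le_add (hT₁.trans hmono₁) (hT₂.trans hmono₂)
    calc ‖∑' k : ℕ, f₁ (k + n)‖ + ‖∑' k : ℕ, f₂ (k + n)‖
        ≤ 2 * C * ‖y₁‖ * (1 - ρ)⁻¹ * ρ ^ n + 2 * C * ‖y₂‖ * (1 - ρ)⁻¹ * ρ ^ n := this
      _ = 2 * C * (‖y₁‖ + ‖y₂‖) * (1 - ρ)⁻¹ * ρ ^ n := by ring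
  have hfin : ‖x₁ - x₂‖ ≤ 2⁻¹ *
      (((n : ℝ) * ((n : ℝ) - 1) / 2 * (2⁻¹ * rowSumNorm (P₁ - P₂) * ‖y₁‖)
          + (n : ℝ) * ‖y₁ - y₂‖)
        + 2 * C * (‖y₁‖ + ‖y₂‖) * (1 - ρ)⁻¹ * ρ ^ n) := by
    refine hmain.trans ?_
    refine mul_le_mul_of_nonneg_left (add_le_add hheadsum htail) (by norm_num)
  refine hfin.trans ?_
  have e1 : 2⁻¹ * (2 * C * (‖y₁‖ + ‖y₂‖) * (1 - ρ)⁻¹ * ρ ^ n) ≤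
      C * (n : ℝ) ^ 2 * ρ ^ n * (‖y₁‖ + ‖y₂‖) / (1 - ρ) := by
    have hn2 : (1 : ℝ) ≤ (n : ℝ) ^ 2 := by nlinarith
    have base : 0 ≤ C * (‖y₁‖ + ‖y₂‖) * ((1 - ρ)⁻¹ * ρ ^ n) :=
      mul_nonneg (mul_nonneg hC0.le (add_nonneg hY₁ hY₂)) (mul_nonneg hiv.le hρn.le)
    calc 2⁻¹ * (2 * C * (‖y₁‖ + ‖y₂‖) * (1 - ρ)⁻¹ * ρ ^ n)
        = C * (‖y₁‖ + ‖y₂‖) * ((1 - ρ)⁻¹ * ρ ^ n) := by ring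
      _ ≤ (n : ℝ) ^ 2 * (C * (‖y₁‖ + ‖y₂‖) * ((1 - ρ)⁻¹ * ρ ^ n)) :=
          le_mul_of_one_le_left base hn2
      _ = C * (n : ℝ) ^ 2 * ρ ^ n * (‖y₁‖ + ‖y₂‖) / (1 - ρ) := by
          rw [div_eq_mul_inv]; ring
  have e2 : 2⁻¹ * ((n : ℝ) * ((n : ℝ) - 1) / 2 * (2⁻¹ * rowSumNorm (P₁ - P₂) * ‖y₁‖)) ≤
      (n : ℝ) ^ 2 / 8 * rowSumNorm (P₁ - P₂) * (‖y₁‖ + ‖y₂‖) := by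
    have m1 : 0 ≤ rowSumNorm (P₁ - P₂) * ‖y₁‖ * (n : ℝ) :=
      mul_nonneg (mul_nonneg hR hY₁) (by linarith)
    have m2 : 0 ≤ rowSumNorm (P₁ - P₂) * ‖y₂‖ * (n : ℝ) ^ 2 :=
      mul_nonneg (mul_nonneg hR hY₂) (by nlinarith)
    nlinarith [m1, m2]
  have e3 : 2⁻¹ * ((n : ℝ) * ‖y₁ - y₂‖) = (n : ℝ) / 2 * ‖y₁ - y₂‖ := by ring
  linarith

end
end

section
/- Let ε₁, ε₂ ∈ [0,1], τ₁, τ₂ > 0, and Q₁, Q₂ : S × A → ℝ, and for i = 1, 2 let πᵢ be the εᵢ-softmax policy of Qᵢ with temperature τᵢ. Then max_{s ∈ S} Σ_{a ∈ A} |π₁(a|s) − π₂(a|s)| ≤ 2 |ε₁ − ε₂| + (1/τ₁) ‖Q₁ − Q₂‖∞ + (|τ₁ − τ₂|/(τ₁ τ₂)) ‖Q₂‖∞. -/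
lemma core (a b c d P R δ : ℝ) (hb : 0 ≤ b) (hd : 0 ≤ d) (hδ : 0 ≤ δ)
    (hPR : P * R = 1) (hP : 0 < P) (hR : 0 < R)
    (haP : a ≤ P * b) (haR : R * b ≤ a) (hcP : c ≤ P * d) (hcR : R * d ≤ c)
    (hK : P - R ≤ δ / 2 * (P + R + 2)) :
    a * d - b * c ≤ δ / 2 * ((a + c) * (b + d)) := by
  have hc0 : 0 ≤ c := le_trans (mul_nonneg hR.le hd) hcR
  rcases le_or_gt d (δ / 2 * (b + d)) with hs | hs
  · nlinarith [mul_nonneg (sub_nonneg.2 haR) (sub_nonneg.2 hs),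
      mul_nonneg hb (sub_nonneg.2 hcR),
      mul_nonneg hδ (mul_nonneg (add_nonneg (mul_nonneg hR.le hb) hc0) (add_nonneg hb hd))]
  · have hAM : 2 * (b * d) ≤ P * b ^ 2 + R * d ^ 2 := by
      nlinarith [sq_nonneg (P * b - d), mul_pos hP hR, sq_nonneg d, sq_nonneg b]
    have step1 : a * d - δ / 2 * ((a + c) * (b + d)) ≤
        P * b * d - δ / 2 * ((P * b + c) * (b + d)) := by
      nlinarith [mul_nonneg (sub_nonneg.2 haP) (sub_nonneg.2 hs.le)]
    have step2 : - (b * c) - δ / 2 * ((P * b + c) * (b + d)) + δ / 2 * ((a + c) * (b + d)) ≤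
        - (R * b * d) - δ / 2 * ((P * b + R * d) * (b + d)) + δ / 2 * ((a + c) * (b + d)) := by
      nlinarith [mul_nonneg (sub_nonneg.2 hcR)
        (add_nonneg (mul_nonneg (by linarith : (0:ℝ) ≤ δ / 2) (add_nonneg hb hd)) hb)]
    have step3 : P * b * d - R * b * d ≤ δ / 2 * ((P * b + R * d) * (b + d)) := by
      nlinarith [mul_nonneg (mul_nonneg hb hd) (sub_nonneg.2 hK),
        mul_nonneg (by linarith : (0:ℝ) ≤ δ / 2) (sub_nonneg.2 hAM)]
    linarith

lemma sinh_le_mul_cosh {u : ℝ} (hu : 0 ≤ u) : Real.sinh u ≤ u * Real.cosh u := by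
  have hdiff : Differentiable ℝ (fun v : ℝ => v * Real.cosh v - Real.sinh v) :=
    (differentiable_fun_id.mul Real.differentiable_cosh).sub Real.differentiable_sinh
  have hmono : MonotoneOn (fun v : ℝ => v * Real.cosh v - Real.sinh v) (Set.Ici 0) := by
    apply monotoneOn_of_deriv_nonneg (convex_Ici 0) hdiff.continuous.continuousOn
      (fun v _ => (hdiff v).differentiableWithinAt)
    intro v hv
    simp only [interior_Ici, Set.mem_Ioi] at hv
    have : deriv (fun v : ℝ => v * Real.cosh v - Real.sinh v) v = v * Real.sinh v := by
      rw [deriv_fun_sub (f := fun v : ℝ => v * Real.cosh v)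
          ((differentiable_fun_id.mul Real.differentiable_cosh) v)
          (Real.differentiable_sinh v),
        deriv_fun_mul (differentiable_fun_id v) (Real.differentiable_cosh v)]
      simp [Real.deriv_cosh, Real.deriv_sinh]
    rw [this]
    exact mul_nonneg hv.le (by positivity)
  have h0 := hmono (Set.self_mem_Ici) (Set.mem_Ici.2 hu) hu
  simp at h0
  linarith

lemma expK {δ : ℝ} (hδ : 0 ≤ δ) :
    Real.exp δ - Real.exp (-δ) ≤ δ / 2 * (Real.exp δ + Real.exp (-δ) + 2) := by
  have key : Real.sinh (δ/2) ≤ δ/2 * Real.cosh (δ/2) := sinh_le_mul_cosh (by linarith)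
  rw [Real.sinh_eq, Real.cosh_eq] at key
  set u := Real.exp (δ/2) with hu
  set v := Real.exp (-(δ/2)) with hv
  have huv : u * v = 1 := by rw [hu, hv, ← Real.exp_add]; simp
  have hu2 : u * u = Real.exp δ := by rw [hu, ← Real.exp_add]; ring_nf
  have hv2 : v * v = Real.exp (-δ) := by rw [hv, ← Real.exp_add]; ring_nf
  have hup : 0 < u := Real.exp_pos _
  have hvp : 0 < v := Real.exp_pos _
  nlinarith [mul_nonneg (sub_nonneg.2 key) (add_pos hup hvp).le]

lemma softmax_l1 {A : Type*} [Fintype A] [Nonempty A] (x y : A → ℝ) (δ : ℝ) (hδ : 0 ≤ δ)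
    (h : ∀ a, |x a - y a| ≤ δ) :
    ∑ a, |Real.exp (x a) / (∑ a', Real.exp (x a')) -
        Real.exp (y a) / (∑ a', Real.exp (y a'))| ≤ δ := by
  classical
  set X := ∑ a', Real.exp (x a') with hXdef
  set Y := ∑ a', Real.exp (y a') with hYdef
  have hX : 0 < X := Finset.sum_pos (fun a _ => Real.exp_pos _) Finset.univ_nonempty
  have hY : 0 < Y := Finset.sum_pos (fun a _ => Real.exp_pos _) Finset.univ_nonempty
  set p : A → ℝ := fun a => Real.exp (x a) / X with hp
  set q : A → ℝ := fun a => Real.exp (y a) / Y with hq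
  have hsp : ∑ a, p a = 1 := by
    rw [hp]; rw [← Finset.sum_div]; exact div_self hX.ne'
  have hsq : ∑ a, q a = 1 := by
    rw [hq]; rw [← Finset.sum_div]; exact div_self hY.ne'
  set B : Finset A := Finset.univ.filter (fun a => q a ≤ p a) with hB
  -- reduce to twice the sum over B
  have hsplit : ∑ a, |p a - q a| = 2 * ∑ a ∈ B, (p a - q a) := by
    have h0 : (∑ a ∈ B, (p a - q a)) + ∑ a ∈ Finset.univ.filter (fun a => ¬ q a ≤ p a), (p a - q a) = 0 := by
      rw [Finset.sum_filter_add_sum_filter_not, Finset.sum_sub_distrib, hsp, hsq]; ring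
    have h1 : ∑ a, |p a - q a| =
        (∑ a ∈ B, (p a - q a)) + ∑ a ∈ Finset.univ.filter (fun a => ¬ q a ≤ p a), (q a - p a) := by
      rw [← Finset.sum_filter_add_sum_filter_not Finset.univ (fun a => q a ≤ p a) (fun a => |p a - q a|)]
      congr 1
      · exact Finset.sum_congr rfl fun a ha => abs_of_nonneg (by simpa using (Finset.mem_filter.1 ha).2)
      · refine Finset.sum_congr rfl fun a ha => ?_
        have := (Finset.mem_filter.1 ha).2
        push_neg at this
        rw [abs_of_neg (by linarith : p a - q a < 0)]
        ring
    rw [h1]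
    have : ∑ a ∈ Finset.univ.filter (fun a => ¬ q a ≤ p a), (q a - p a)
        = - ∑ a ∈ Finset.univ.filter (fun a => ¬ q a ≤ p a), (p a - q a) := by
      rw [← Finset.sum_neg_distrib]; exact Finset.sum_congr rfl fun a _ => by ring
    rw [this]; linarith
  rw [hsplit]
  -- bound the sum over B by δ/2
  set Ux := ∑ a ∈ B, Real.exp (x a) with hUx
  set Uy := ∑ a ∈ B, Real.exp (y a) with hUy
  set Vx := ∑ a ∈ Bᶜ, Real.exp (x a) with hVx
  set Vy := ∑ a ∈ Bᶜ, Real.exp (y a) with hVy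
  have hXsum : Ux + Vx = X := by rw [hUx, hVx, hXdef, Finset.sum_add_sum_compl]
  have hYsum : Uy + Vy = Y := by rw [hUy, hVy, hYdef, Finset.sum_add_sum_compl]
  have hSB : ∑ a ∈ B, (p a - q a) = Ux / X - Uy / Y := by
    rw [Finset.sum_sub_distrib, hp, hq]
    simp only []
    rw [← Finset.sum_div, ← Finset.sum_div]
  have hUy0 : 0 ≤ Uy := Finset.sum_nonneg fun a _ => (Real.exp_pos _).le
  have hVy0 : 0 ≤ Vy := Finset.sum_nonneg fun a _ => (Real.exp_pos _).le
  have hUxP : Ux ≤ Real.exp δ * Uy := by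
    rw [Finset.mul_sum]
    exact Finset.sum_le_sum fun a _ => by
      rw [← Real.exp_add]; exact Real.exp_le_exp.2 (by linarith [(abs_le.1 (h a)).2])
  have hUxR : Real.exp (-δ) * Uy ≤ Ux := by
    rw [Finset.mul_sum]
    exact Finset.sum_le_sum fun a _ => by
      rw [← Real.exp_add]; exact Real.exp_le_exp.2 (by linarith [(abs_le.1 (h a)).1])
  have hVxP : Vx ≤ Real.exp δ * Vy := by
    rw [Finset.mul_sum]
    exact Finset.sum_le_sum fun a _ => by
      rw [← Real.exp_add]; exact Real.exp_le_exp.2 (by linarith [(abs_le.1 (h a)).2])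
  have hVxR : Real.exp (-δ) * Vy ≤ Vx := by
    rw [Finset.mul_sum]
    exact Finset.sum_le_sum fun a _ => by
      rw [← Real.exp_add]; exact Real.exp_le_exp.2 (by linarith [(abs_le.1 (h a)).1])
  have hPR : Real.exp δ * Real.exp (-δ) = 1 := by rw [← Real.exp_add]; simp
  have hcore := core Ux Uy Vx Vy (Real.exp δ) (Real.exp (-δ)) δ hUy0 hVy0 hδ hPR
    (Real.exp_pos _) (Real.exp_pos _) hUxP hUxR hVxP hVxR (expK hδ)
  have hdiff : Ux * Y - X * Uy = Ux * Vy - Uy * Vx := by rw [← hXsum, ← hYsum]; ring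
  have hfinal : Ux / X - Uy / Y ≤ δ / 2 := by
    rw [div_sub_div _ _ hX.ne' hY.ne', div_le_iff₀ (mul_pos hX hY)]
    calc Ux * Y - X * Uy = Ux * Vy - Uy * Vx := hdiff
      _ ≤ δ / 2 * ((Ux + Vx) * (Uy + Vy)) := hcore
      _ = δ / 2 * (X * Y) := by rw [hXsum, hYsum]
  rw [hSB]
  linarith


section

variable {S A : Type*} [Fintype S] [Fintype A] [Nonempty S] [Nonempty A]

/-- The `ε`-softmax policy of `Q` with temperature `τ`. -/
noncomputable def softmaxPolicy (Q : S × A → ℝ) (ε τ : ℝ) : S → A → ℝ :=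
  fun s a => ε / (Fintype.card A : ℝ) +
    (1 - ε) * Real.exp (Q (s, a) / τ) / ∑ a', Real.exp (Q (s, a') / τ)


lemma abs_le_supNorm (Q : S × A → ℝ) (z : S × A) : |Q z| ≤ supNorm Q := by
  unfold supNorm
  exact Finset.le_sup' (fun y => |Q y|) (Finset.mem_univ z)

/-- Lipschitz continuity of the ε-softmax policy in `(ε, τ, Q)`:
`max_s Σ_a |π₁(a|s) − π₂(a|s)| ≤ 2|ε₁−ε₂| + (1/τ₁)‖Q₁−Q₂‖∞ + (|τ₁−τ₂|/(τ₁τ₂))‖Q₂‖∞`. -/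
theorem stmt_17
    (ε₁ ε₂ τ₁ τ₂ : ℝ)
    (hε₁0 : 0 ≤ ε₁) (hε₁1 : ε₁ ≤ 1) (hε₂0 : 0 ≤ ε₂) (hε₂1 : ε₂ ≤ 1)
    (hτ₁ : 0 < τ₁) (hτ₂ : 0 < τ₂)
    (Q₁ Q₂ : S × A → ℝ) :
    (Finset.univ.sup' Finset.univ_nonempty fun s : S =>
        ∑ a, |softmaxPolicy Q₁ ε₁ τ₁ s a - softmaxPolicy Q₂ ε₂ τ₂ s a|) ≤
      2 * |ε₁ - ε₂| + 1 / τ₁ * supNorm (Q₁ - Q₂) +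
        |τ₁ - τ₂| / (τ₁ * τ₂) * supNorm Q₂ := by
  have hcard : (0:ℝ) < (Fintype.card A : ℝ) := by
    exact_mod_cast Fintype.card_pos
  set δ : ℝ := 1 / τ₁ * supNorm (Q₁ - Q₂) + |τ₁ - τ₂| / (τ₁ * τ₂) * supNorm Q₂ with hδdef
  have hδ : 0 ≤ δ := add_nonneg
    (mul_nonneg (by positivity) (supNorm_nonneg _))
    (mul_nonneg (by positivity) (supNorm_nonneg _))
  apply Finset.sup'_le
  intro s _
  set x : A → ℝ := fun a => Q₁ (s, a) / τ₁ with hx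
  set y : A → ℝ := fun a => Q₂ (s, a) / τ₂ with hy
  have hxy : ∀ a, |x a - y a| ≤ δ := by
    intro a
    have e : x a - y a = (Q₁ - Q₂) (s, a) / τ₁ + Q₂ (s, a) * (τ₂ - τ₁) / (τ₁ * τ₂) := by
      simp only [hx, hy, Pi.sub_apply]
      field_simp
      ring
    rw [e]
    refine le_trans (abs_add_le _ _) (add_le_add ?_ ?_)
    · rw [abs_div, abs_of_pos hτ₁, div_eq_mul_one_div, mul_comm]
      exact mul_le_mul_of_nonneg_left (abs_le_supNorm _ _) (by positivity)
    · have e3 : |Q₂ (s, a) * (τ₂ - τ₁) / (τ₁ * τ₂)| =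
          |τ₁ - τ₂| / (τ₁ * τ₂) * |Q₂ (s, a)| := by
        rw [abs_div, abs_mul, abs_of_pos (mul_pos hτ₁ hτ₂), abs_sub_comm τ₂ τ₁]
        ring
      rw [e3]
      exact mul_le_mul_of_nonneg_left (abs_le_supNorm _ _) (by positivity)
  set X := ∑ a', Real.exp (x a') with hX
  set Y := ∑ a', Real.exp (y a') with hY
  have hXpos : 0 < X := Finset.sum_pos (fun a _ => Real.exp_pos _) Finset.univ_nonempty
  have hYpos : 0 < Y := Finset.sum_pos (fun a _ => Real.exp_pos _) Finset.univ_nonempty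
  have hq1 : ∑ a, Real.exp (y a) / Y = 1 := by
    rw [← Finset.sum_div]; exact div_self hYpos.ne'
  have hsoft := softmax_l1 x y δ hδ hxy
  have hpt : ∀ a, |softmaxPolicy Q₁ ε₁ τ₁ s a - softmaxPolicy Q₂ ε₂ τ₂ s a| ≤
      |ε₁ - ε₂| / (Fintype.card A : ℝ) +
      (1 - ε₁) * |Real.exp (x a) / X - Real.exp (y a) / Y| +
      |ε₁ - ε₂| * (Real.exp (y a) / Y) := by
    intro a
    have e2 : softmaxPolicy Q₁ ε₁ τ₁ s a - softmaxPolicy Q₂ ε₂ τ₂ s a =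
        (ε₁ - ε₂) / (Fintype.card A : ℝ) +
        ((1 - ε₁) * (Real.exp (x a) / X - Real.exp (y a) / Y) +
         (ε₂ - ε₁) * (Real.exp (y a) / Y)) := by
      simp only [softmaxPolicy, hx, hy, hX, hY]
      ring
    rw [e2]
    refine le_trans (abs_add_le _ _) ?_
    rw [abs_div, abs_of_pos hcard]
    rw [add_assoc]
    refine add_le_add_right (le_trans (abs_add_le _ _) (add_le_add ?_ ?_)) _
    · rw [abs_mul, abs_of_nonneg (by linarith : (0:ℝ) ≤ 1 - ε₁)]
    · rw [abs_mul, abs_sub_comm ε₂ ε₁,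
        abs_of_nonneg (by positivity : (0:ℝ) ≤ Real.exp (y a) / Y)]
  calc (∑ a, |softmaxPolicy Q₁ ε₁ τ₁ s a - softmaxPolicy Q₂ ε₂ τ₂ s a|)
      ≤ ∑ a, (|ε₁ - ε₂| / (Fintype.card A : ℝ) +
        (1 - ε₁) * |Real.exp (x a) / X - Real.exp (y a) / Y| +
        |ε₁ - ε₂| * (Real.exp (y a) / Y)) := Finset.sum_le_sum fun a _ => hpt a
    _ = |ε₁ - ε₂| + (1 - ε₁) * (∑ a, |Real.exp (x a) / X - Real.exp (y a) / Y|)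
        + |ε₁ - ε₂| * 1 := by
        rw [Finset.sum_add_distrib, Finset.sum_add_distrib, ← Finset.mul_sum, ← Finset.mul_sum,
          hq1, Finset.sum_const, Finset.card_univ, nsmul_eq_mul]
        congr 1
        congr 1
        field_simp
    _ ≤ |ε₁ - ε₂| + 1 * δ + |ε₁ - ε₂| * 1 := by
        refine add_le_add_left (add_le_add_right ?_ _) _
        refine mul_le_mul (by linarith) hsoft (Finset.sum_nonneg fun a _ => abs_nonneg _) one_pos.le
    _ ≤ 2 * |ε₁ - ε₂| + 1 / τ₁ * supNorm (Q₁ - Q₂) + |τ₁ - τ₂| / (τ₁ * τ₂) * supNorm Q₂ := by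
        rw [hδdef]; ring_nf; linarith [abs_nonneg (ε₁ - ε₂)]


end
end
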